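/- Let f be a ρ-symmetric bounded affine permutation of type (n,2n) and set m = #{i ∈ {1,…,2n} : f(i) = i+n} (m is even). Then 2·σℓ(f) = ℓ(f) + n − m/2. Equivalently, setting d(f) := n² − ℓ(f) and σdim(f) := n(n+1)/2 − σℓ(f), one has d(f) = 2·σdim(f) − m/2. -/

import Mathlib

private def normN (N x : ℤ) : ℤ := (x - 1) % N + 1

private lemma normN_bounds {N : ℤ} (hN : 0 < N) (x : ℤ) :
    1 ≤ normN N x ∧ normN N x ≤ N := by
  unfold normN
  have h1 := Int.emod_nonneg (x - 1) (ne_of_gt hN)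
  have h2 := Int.emod_lt_of_pos (x - 1) hN
  omega

private lemma normN_dvd (N x : ℤ) : N ∣ (normN N x - x) := by
  refine ⟨-((x - 1) / N), ?_⟩
  have := Int.emod_def (x - 1) N
  unfold normN
  linarith [this]

private lemma normN_eq_of {N : ℤ} (hN : 0 < N) {x y : ℤ}
    (h1 : 1 ≤ y) (h2 : y ≤ N) (hd : N ∣ (y - x)) : normN N x = y := by
  have hd2 := normN_dvd N x
  have hb := normN_bounds hN x
  have hd3 : N ∣ (normN N x - y) := by
    have : normN N x - y = (normN N x - x) - (y - x) := by ring
    rw [this]; exact dvd_sub hd2 hd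
  obtain ⟨k, hk⟩ := hd3
  have hb1 := hb.1; have hb2 := hb.2
  -- |normN N x - y| < N so k = 0
  rcases lt_trichotomy k 0 with h | h | h
  · have hk1 : N * k ≤ -N := by nlinarith
    linarith
  · subst h
    simp at hk
    omega
  · have hk1 : N ≤ N * k := by nlinarith
    linarith

private lemma per_mul {n : ℕ} {f : ℤ → ℤ}
    (hper : ∀ i : ℤ, f (i + 2 * (n : ℤ)) = f i + 2 * (n : ℤ)) :
    ∀ (x k : ℤ), f (x + 2 * (n : ℤ) * k) = f x + 2 * (n : ℤ) * k := by
  intro x k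
  induction k using Int.induction_on with
  | zero => simp
  | succ k ih =>
      have h := hper (x + 2 * (n : ℤ) * k)
      rw [ih] at h
      have e : x + 2 * (n : ℤ) * (k + 1) = x + 2 * (n : ℤ) * k + 2 * (n : ℤ) := by ring
      rw [e, h]; ring
  | pred k ih =>
      have h := hper (x + 2 * (n : ℤ) * (-k - 1))
      have e : x + 2 * (n : ℤ) * (-k - 1) + 2 * (n : ℤ) = x + 2 * (n : ℤ) * (-k) := by ring
      rw [e, ih] at h
      linarith [h]

private lemma per_dvd {n : ℕ} {f : ℤ → ℤ}
    (hper : ∀ i : ℤ, f (i + 2 * (n : ℤ)) = f i + 2 * (n : ℤ)) :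
    ∀ (x c : ℤ), (2 * (n : ℤ)) ∣ c → f (x + c) = f x + c := by
  rintro x c ⟨k, rfl⟩
  exact per_mul hper x k



/-- The set of alignments `(i,j)` of `f` with `1 ≤ i ≤ 2n`: pairs with `i < j ≤ f j < f i`. -/
def alignSet (n : ℕ) (f : ℤ → ℤ) : Set (ℤ × ℤ) :=
  {p | 1 ≤ p.1 ∧ p.1 ≤ 2 * (n : ℤ) ∧ p.1 < p.2 ∧ p.2 ≤ f p.2 ∧ f p.2 < f p.1}

/-- The mirror map on alignments of a ρ-symmetric `f`: `(i,j)` is sent to the pair obtained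
from `(f j + n, f i + n)` by adding to both coordinates the unique multiple of `2n`
placing the first coordinate in `{1, …, 2n}`. -/
def mirror (n : ℕ) (f : ℤ → ℤ) (p : ℤ × ℤ) : ℤ × ℤ :=
  ((f p.2 + (n : ℤ) - 1) % (2 * (n : ℤ)) + 1,
   f p.1 + (n : ℤ) + (((f p.2 + (n : ℤ) - 1) % (2 * (n : ℤ)) + 1) - (f p.2 + (n : ℤ))))

/-- `ℓ(f)`: the number of alignments `(i,j)` of `f` with `1 ≤ i ≤ 2n`. -/
noncomputable def lenBAP (n : ℕ) (f : ℤ → ℤ) : ℕ := (alignSet n f).ncard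

/-- `σℓ(f)`: the number of orbits of the mirror involution on the alignments of `f`;
a pair of distinct mirrored alignments counts once and each self-mirror alignment
counts once, so it equals `(#alignments + #self-mirror alignments)/2`. -/
noncomputable def sigmaL (n : ℕ) (f : ℤ → ℤ) : ℕ :=
  ((alignSet n f).ncard + {p ∈ alignSet n f | mirror n f p = p}.ncard) / 2

private lemma mirror_spec {n : ℕ} {f : ℤ → ℤ} (hn : 0 < n)
    (hper : ∀ i : ℤ, f (i + 2 * (n : ℤ)) = f i + 2 * (n : ℤ))
    (hsym : ∀ i : ℤ, f (f i - (n : ℤ)) = i + (n : ℤ)) (p : ℤ × ℤ) :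
    ∃ a b : ℤ, mirror n f p = (a, b) ∧ 1 ≤ a ∧ a ≤ 2 * (n : ℤ) ∧
      (2 * (n : ℤ)) ∣ (a - (f p.2 + (n : ℤ))) ∧
      b = f p.1 + a - f p.2 ∧
      f a = p.2 + 2 * (n : ℤ) + a - f p.2 ∧
      f b = p.1 + a - f p.2 + 2 * (n : ℤ) := by
  have hN : (0 : ℤ) < 2 * (n : ℤ) := by positivity
  set a := normN (2 * (n : ℤ)) (f p.2 + (n : ℤ)) with ha
  have hb1 := (normN_bounds hN (f p.2 + (n : ℤ))).1
  have hb2 := (normN_bounds hN (f p.2 + (n : ℤ))).2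
  have hdvd : (2 * (n : ℤ)) ∣ (a - (f p.2 + (n : ℤ))) := normN_dvd _ _
  refine ⟨a, f p.1 + (n : ℤ) + (a - (f p.2 + (n : ℤ))), rfl, hb1, hb2, hdvd, by ring, ?_, ?_⟩
  · have e : a = (f p.2 - (n : ℤ)) + (a - (f p.2 + (n : ℤ)) + 2 * (n : ℤ)) := by ring
    have hd2 : (2 * (n : ℤ)) ∣ (a - (f p.2 + (n : ℤ)) + 2 * (n : ℤ)) :=
      dvd_add hdvd ⟨1, by ring⟩
    calc f a = f ((f p.2 - (n : ℤ)) + (a - (f p.2 + (n : ℤ)) + 2 * (n : ℤ))) := by rw [← e]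
    _ = f (f p.2 - (n : ℤ)) + (a - (f p.2 + (n : ℤ)) + 2 * (n : ℤ)) := per_dvd hper _ _ hd2
    _ = p.2 + (n : ℤ) + (a - (f p.2 + (n : ℤ)) + 2 * (n : ℤ)) := by rw [hsym]
    _ = p.2 + 2 * (n : ℤ) + a - f p.2 := by ring
  · have e : f p.1 + (n : ℤ) + (a - (f p.2 + (n : ℤ)))
        = (f p.1 - (n : ℤ)) + (a - (f p.2 + (n : ℤ)) + 2 * (n : ℤ)) := by ring
    have hd2 : (2 * (n : ℤ)) ∣ (a - (f p.2 + (n : ℤ)) + 2 * (n : ℤ)) :=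
      dvd_add hdvd ⟨1, by ring⟩
    calc f (f p.1 + (n : ℤ) + (a - (f p.2 + (n : ℤ))))
        = f ((f p.1 - (n : ℤ)) + (a - (f p.2 + (n : ℤ)) + 2 * (n : ℤ))) := by rw [← e]
    _ = f (f p.1 - (n : ℤ)) + (a - (f p.2 + (n : ℤ)) + 2 * (n : ℤ)) := per_dvd hper _ _ hd2
    _ = p.1 + (n : ℤ) + (a - (f p.2 + (n : ℤ)) + 2 * (n : ℤ)) := by rw [hsym]
    _ = p.1 + a - f p.2 + 2 * (n : ℤ) := by ring

private lemma mirror_mem {n : ℕ} {f : ℤ → ℤ} (hn : 0 < n)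
    (hper : ∀ i : ℤ, f (i + 2 * (n : ℤ)) = f i + 2 * (n : ℤ))
    (hbound : ∀ i : ℤ, i ≤ f i ∧ f i ≤ i + 2 * (n : ℤ))
    (hsym : ∀ i : ℤ, f (f i - (n : ℤ)) = i + (n : ℤ))
    {p : ℤ × ℤ} (hp : p ∈ alignSet n f) : mirror n f p ∈ alignSet n f := by
  obtain ⟨h1, h2, h3, h4, h5⟩ := hp
  obtain ⟨a, b, heq, ha1, ha2, hdvd, hb, hfa, hfb⟩ := mirror_spec hn hper hsym p
  rw [heq]
  have hbp1 := hbound p.1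
  have key3 : a < b := by rw [hb]; linarith
  have key4 : b ≤ f b := by rw [hfb, hb]; linarith [hbp1.2]
  have key5 : f b < f a := by rw [hfa, hfb]; linarith
  exact ⟨ha1, ha2, key3, key4, key5⟩

private lemma mirror_inv {n : ℕ} {f : ℤ → ℤ} (hn : 0 < n)
    (hper : ∀ i : ℤ, f (i + 2 * (n : ℤ)) = f i + 2 * (n : ℤ))
    (hsym : ∀ i : ℤ, f (f i - (n : ℤ)) = i + (n : ℤ))
    {p : ℤ × ℤ} (hp : p ∈ alignSet n f) : mirror n f (mirror n f p) = p := by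
  have hN : (0 : ℤ) < 2 * (n : ℤ) := by positivity
  obtain ⟨h1, h2, h3, h4, h5⟩ := hp
  obtain ⟨a, b, heq, ha1, ha2, hdvd, hb, hfa, hfb⟩ := mirror_spec hn hper hsym p
  rw [heq]
  obtain ⟨a', b', heq', ha1', ha2', hdvd', hb', hfa', hfb'⟩ :=
    mirror_spec hn hper hsym (a, b)
  rw [heq']
  have hfb2 : f b = p.1 + a - f p.2 + 2 * (n : ℤ) := hfb
  have haa : a' = p.1 := by
    have : a' = normN (2 * (n : ℤ)) (f (a, b).2 + (n : ℤ)) := by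
      have := heq'
      simp only [mirror, Prod.mk.injEq] at this
      exact this.1.symm
    rw [this]
    refine normN_eq_of hN h1 h2 ?_
    have : p.1 - (f (a, b).2 + (n : ℤ)) = -(a - (f p.2 + (n : ℤ))) - 2 * (2 * (n : ℤ)) := by
      simp only []
      rw [hfb2]; ring
    rw [this]
    exact dvd_sub (dvd_neg.mpr hdvd) ⟨2, by ring⟩
  have hfab : f (a, b).1 = p.2 + 2 * (n : ℤ) + a - f p.2 := hfa
  have hbb : b' = p.2 := by
    rw [hb', haa]
    simp only []
    rw [hfa, hfb2]
    ring
  rw [haa, hbb]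


private lemma eq_of_dvd_bounds {N a b : ℤ} (hN : 0 < N) (ha1 : 1 ≤ a) (ha2 : a ≤ N)
    (hb1 : 1 ≤ b) (hb2 : b ≤ N) (hd : N ∣ a - b) : a = b := by
  obtain ⟨k, hk⟩ := hd
  rcases lt_trichotomy k 0 with h | h | h
  · have hk1 : N * k ≤ -N := by nlinarith
    linarith
  · subst h
    simp at hk
    omega
  · have hk1 : N ≤ N * k := by nlinarith
    linarith

private lemma fix_iff {n : ℕ} {f : ℤ → ℤ} (hn : 0 < n)
    (hper : ∀ i : ℤ, f (i + 2 * (n : ℤ)) = f i + 2 * (n : ℤ))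
    (hbound : ∀ i : ℤ, i ≤ f i ∧ f i ≤ i + 2 * (n : ℤ))
    (hsym : ∀ i : ℤ, f (f i - (n : ℤ)) = i + (n : ℤ)) (p : ℤ × ℤ) :
    (p ∈ alignSet n f ∧ mirror n f p = p) ↔
      (1 ≤ p.1 ∧ p.1 ≤ 2 * (n : ℤ) ∧ p.1 + (n : ℤ) < f p.1 ∧ p.2 = f p.1 - (n : ℤ)) := by
  have hN : (0 : ℤ) < 2 * (n : ℤ) := by positivity
  constructor
  · rintro ⟨⟨h1, h2, h3, h4, h5⟩, hfix⟩
    obtain ⟨a, b, heq, ha1, ha2, hdvd, hb, hfa, hfb⟩ := mirror_spec hn hper hsym p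
    rw [hfix] at heq
    have hpa : p.1 = a := by rw [heq]
    have hpb : p.2 = b := by rw [heq]
    rw [← hpa, ← hpb] at hb
    rw [← hpa] at hfa
    have hval : f p.1 = p.2 + (n : ℤ) := by linarith
    exact ⟨h1, h2, by linarith, by linarith⟩
  · rintro ⟨h1, h2, h3, h4⟩
    have hfp2 : f p.2 = p.1 + (n : ℤ) := by rw [h4, hsym p.1]
    have hmem : p ∈ alignSet n f := by
      refine ⟨h1, h2, ?_, ?_, ?_⟩
      · rw [h4]; linarith
      · rw [hfp2, h4]; linarith [(hbound p.1).2]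
      · rw [hfp2]; linarith
    refine ⟨hmem, ?_⟩
    obtain ⟨a, b, heq, ha1, ha2, hdvd, hb, hfa, hfb⟩ := mirror_spec hn hper hsym p
    rw [heq]
    have haeq : a = p.1 := by
      refine eq_of_dvd_bounds hN ha1 ha2 h1 h2 ?_
      have e : a - p.1 = (a - (f p.2 + (n : ℤ))) + 2 * (n : ℤ) := by rw [hfp2]; ring
      rw [e]
      exact dvd_add hdvd ⟨1, by ring⟩
    have hbeq : b = p.2 := by rw [hb, haeq, hfp2, h4]; ring
    rw [haeq, hbeq]

/-- For ρ-symmetric bounded affine `f` of type `(n,2n)` with `m = #{i : f i = i+n}`: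
`2σℓ(f) = ℓ(f) + n − m/2`; equivalently `d(f) = 2σdim(f) − m/2` where
`d(f) = n² − ℓ(f)` and `σdim(f) = n(n+1)/2 − σℓ(f)`. -/
theorem stmt7 (n : ℕ) (f : ℤ → ℤ)
    (hbij : Function.Bijective f)
    (hper : ∀ i : ℤ, f (i + 2 * (n : ℤ)) = f i + 2 * (n : ℤ))
    (hbound : ∀ i : ℤ, i ≤ f i ∧ f i ≤ i + 2 * (n : ℤ))
    (hsum : ∑ i ∈ Finset.Icc (1 : ℤ) (2 * (n : ℤ)), (f i - i) = 2 * (n : ℤ) ^ 2)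
    (hsym : ∀ i : ℤ, f (f i - (n : ℤ)) = i + (n : ℤ))
    (m : ℕ)
    (hm : m = ((Finset.Icc (1 : ℤ) (2 * (n : ℤ))).filter
      (fun i => f i = i + (n : ℤ))).card) :
    2 * (sigmaL n f : ℤ) = (lenBAP n f : ℤ) + (n : ℤ) - (m : ℤ) / 2 ∧
    (n : ℤ) ^ 2 - (lenBAP n f : ℤ) =
      2 * (((n : ℤ) * ((n : ℤ) + 1)) / 2 - (sigmaL n f : ℤ)) - (m : ℤ) / 2 := by
  classical
  rcases Nat.eq_zero_or_pos n with hn0 | hn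
  · subst hn0
    have hempty : alignSet 0 f = ∅ := by
      ext p
      simp only [alignSet, Set.mem_setOf_eq, Set.mem_empty_iff_false, iff_false, not_and]
      intro hp1 hp2
      exfalso
      simp only [Nat.cast_zero, mul_zero] at hp2
      omega
    have hm0 : m = 0 := by
      rw [hm]
      have : Finset.Icc (1 : ℤ) (2 * ((0 : ℕ) : ℤ)) = ∅ := by
        apply Finset.Icc_eq_empty
        norm_num
      rw [this]
      simp
    have hsep : {p ∈ alignSet 0 f | mirror 0 f p = p} = (∅ : Set (ℤ × ℤ)) := by
      rw [hempty]
      ext p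
      simp
    have hL : lenBAP 0 f = 0 := by
      rw [lenBAP, hempty]
      exact Set.ncard_empty _
    have hS : sigmaL 0 f = 0 := by
      rw [sigmaL, hsep, hempty]
      simp
    rw [hL, hS, hm0]
    norm_num
  · have hN : (0 : ℤ) < 2 * (n : ℤ) := by positivity
    have hfin : (alignSet n f).Finite := by
      apply Set.Finite.subset
        (((Set.finite_Icc (1 : ℤ) (2 * (n : ℤ))).prod (Set.finite_Icc (1 : ℤ) (4 * (n : ℤ)))))
      rintro p ⟨h1, h2, h3, h4, h5⟩
      have hb := (hbound p.1).2
      exact Set.mem_prod.mpr ⟨Set.mem_Icc.mpr ⟨h1, h2⟩,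
        Set.mem_Icc.mpr ⟨by linarith, by linarith⟩⟩
    set F : Finset (ℤ × ℤ) := hfin.toFinset with hFdef
    have hmemF : ∀ p, p ∈ F ↔ p ∈ alignSet n f := fun p => hfin.mem_toFinset
    set Ffix : Finset (ℤ × ℤ) := F.filter (fun p => mirror n f p = p) with hFfix
    have hmemFfix : ∀ p, p ∈ Ffix ↔ (p ∈ alignSet n f ∧ mirror n f p = p) := by
      intro p
      simp [hFfix, Finset.mem_filter, hmemF]
    have hlen : lenBAP n f = F.card := Set.ncard_eq_toFinset_card _ hfin
    have hfixset : {p ∈ alignSet n f | mirror n f p = p} = ↑Ffix := by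
      ext p
      simp only [Set.mem_sep_iff, Finset.mem_coe, hmemFfix]
    have hsig : sigmaL n f = (F.card + Ffix.card) / 2 := by
      unfold sigmaL
      rw [hfixset, Set.ncard_coe_finset, Set.ncard_eq_toFinset_card _ hfin]
    set M : Finset (ℤ × ℤ) := F.filter (fun p => ¬ mirror n f p = p) with hM
    have hsplit : Ffix.card + M.card = F.card := by
      rw [hFfix, hM]
      exact Finset.card_filter_add_card_filter_not _
    have hprod : (∏ _p ∈ M, (-1 : ℤ)) = 1 := by
      refine Finset.prod_involution (fun p _ => mirror n f p) ?_ ?_ ?_ ?_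
      · intro a _
        norm_num
      · intro a ha _
        exact (Finset.mem_filter.mp ha).2
      · intro a ha
        obtain ⟨haF, hane⟩ := Finset.mem_filter.mp ha
        have haA : a ∈ alignSet n f := (hmemF a).mp haF
        refine Finset.mem_filter.mpr ⟨(hmemF _).mpr (mirror_mem hn hper hbound hsym haA), ?_⟩
        rw [mirror_inv hn hper hsym haA]
        exact fun h => hane h.symm
      · intro a ha
        exact mirror_inv hn hper hsym ((hmemF a).mp (Finset.mem_filter.mp ha).1)
    have hMeven : Even M.card := by
      rw [Finset.prod_const] at hprod
      exact (neg_one_pow_eq_one_iff_even (by norm_num)).mp hprod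
    set I : Finset ℤ := Finset.Icc (1 : ℤ) (2 * (n : ℤ)) with hIdef
    have hIcard : I.card = 2 * n := by
      rw [hIdef, Int.card_Icc]
      omega
    set S : Finset ℤ := I.filter (fun i => i + (n : ℤ) < f i) with hSdef
    have hmemS : ∀ i, i ∈ S ↔ (1 ≤ i ∧ i ≤ 2 * (n : ℤ) ∧ i + (n : ℤ) < f i) := by
      intro i
      simp [hSdef, hIdef, Finset.mem_filter, Finset.mem_Icc, and_assoc]
    have himg : Ffix = S.image (fun i => (i, f i - (n : ℤ))) := by
      ext p
      rw [hmemFfix, Finset.mem_image]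
      constructor
      · rintro ⟨hpA, hpfix⟩
        obtain ⟨h1, h2, h3, h4⟩ := (fix_iff hn hper hbound hsym p).mp ⟨hpA, hpfix⟩
        refine ⟨p.1, (hmemS p.1).mpr ⟨h1, h2, h3⟩, ?_⟩
        rw [← h4]
      · rintro ⟨i, hiS, hip⟩
        obtain ⟨hi1, hi2, hi3⟩ := (hmemS i).mp hiS
        have hfx := (fix_iff hn hper hbound hsym (i, f i - (n : ℤ))).mpr ⟨hi1, hi2, hi3, rfl⟩
        rw [← hip]
        exact hfx
    have hScard : Ffix.card = S.card := by
      rw [himg, Finset.card_image_of_injective]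
      intro a b h
      simpa using congrArg Prod.fst h
    set T : Finset ℤ := I.filter (fun i => f i < i + (n : ℤ)) with hTdef
    set E : Finset ℤ := I.filter (fun i => f i = i + (n : ℤ)) with hEdef
    have hunion : I.filter (fun i => ¬ (i + (n : ℤ) < f i)) = E ∪ T := by
      ext i
      rw [hEdef, hTdef]
      simp only [Finset.mem_filter, Finset.mem_union]
      constructor
      · rintro ⟨hi, hle⟩
        rcases lt_or_eq_of_le (not_lt.mp hle) with h | h
        · exact Or.inr ⟨hi, h⟩
        · exact Or.inl ⟨hi, h⟩
      · rintro (⟨hi, h⟩ | ⟨hi, h⟩) <;> exact ⟨hi, by omega⟩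
    have hdisj : Disjoint E T := by
      rw [Finset.disjoint_left]
      intro i hiE hiT
      rw [hEdef, Finset.mem_filter] at hiE
      rw [hTdef, Finset.mem_filter] at hiT
      omega
    have hpart : S.card + (E.card + T.card) = I.card := by
      rw [← Finset.card_union_of_disjoint hdisj, ← hunion, hSdef]
      exact Finset.card_filter_add_card_filter_not _
    have hEm : E.card = m := by
      rw [hm]
    set φ : ℤ → ℤ := fun i => normN (2 * (n : ℤ)) (f i - (n : ℤ)) with hphidef
    have hphi : ∀ i : ℤ, 1 ≤ φ i ∧ φ i ≤ 2 * (n : ℤ) ∧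
        f (φ i) = i + 2 * (n : ℤ) + φ i - f i := by
      intro i
      have hb := normN_bounds hN (f i - (n : ℤ))
      have hd := normN_dvd (2 * (n : ℤ)) (f i - (n : ℤ))
      refine ⟨hb.1, hb.2, ?_⟩
      have e : φ i = (f i - (n : ℤ)) + (φ i - (f i - (n : ℤ))) := by ring
      calc f (φ i) = f ((f i - (n : ℤ)) + (φ i - (f i - (n : ℤ)))) := by rw [← e]
      _ = f (f i - (n : ℤ)) + (φ i - (f i - (n : ℤ))) := per_dvd hper _ _ hd
      _ = i + (n : ℤ) + (φ i - (f i - (n : ℤ))) := by rw [hsym]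
      _ = i + 2 * (n : ℤ) + φ i - f i := by ring
    have hphiinv : ∀ i : ℤ, 1 ≤ i → i ≤ 2 * (n : ℤ) → φ (φ i) = i := by
      intro i hi1 hi2
      have hd := normN_dvd (2 * (n : ℤ)) (f i - (n : ℤ))
      have hf := (hphi i).2.2
      refine normN_eq_of hN hi1 hi2 ?_
      have e : i - (f (φ i) - (n : ℤ)) = -(φ i - (f i - (n : ℤ))) := by rw [hf]; ring
      rw [e]
      exact dvd_neg.mpr hd
    have hST : S.card = T.card := by
      rw [hSdef, hTdef, hIdef]
      refine Finset.card_nbij' φ φ ?_ ?_ ?_ ?_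
      · intro i hi
        rw [Finset.mem_coe, Finset.mem_filter, Finset.mem_Icc] at hi ⊢
        obtain ⟨⟨hi1, hi2⟩, hi3⟩ := hi
        obtain ⟨h1, h2, h3⟩ := hphi i
        exact ⟨⟨h1, h2⟩, by rw [h3]; linarith⟩
      · intro i hi
        rw [Finset.mem_coe, Finset.mem_filter, Finset.mem_Icc] at hi ⊢
        obtain ⟨⟨hi1, hi2⟩, hi3⟩ := hi
        obtain ⟨h1, h2, h3⟩ := hphi i
        exact ⟨⟨h1, h2⟩, by rw [h3]; linarith⟩
      · intro i hi
        rw [Finset.mem_coe, Finset.mem_filter, Finset.mem_Icc] at hi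
        exact hphiinv i hi.1.1 hi.1.2
      · intro i hi
        rw [Finset.mem_coe, Finset.mem_filter, Finset.mem_Icc] at hi
        exact hphiinv i hi.1.1 hi.1.2
    have heven : Even (F.card + Ffix.card) := by
      obtain ⟨k, hk⟩ := hMeven
      exact ⟨Ffix.card + k, by omega⟩
    obtain ⟨k, hk⟩ := heven
    have hsig2 : sigmaL n f = k := by rw [hsig]; omega
    have e1 : 2 * (sigmaL n f : ℤ) = (lenBAP n f : ℤ) + (S.card : ℤ) := by
      have h : 2 * sigmaL n f = lenBAP n f + S.card := by omega
      exact_mod_cast h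
    have e2 : (m : ℤ) + 2 * (S.card : ℤ) = 2 * (n : ℤ) := by
      have h : m + 2 * S.card = 2 * n := by omega
      exact_mod_cast h
    have e5 : (m : ℤ) / 2 = (n : ℤ) - (S.card : ℤ) := by omega
    have e3 : 2 * (((n : ℤ) * ((n : ℤ) + 1)) / 2) = (n : ℤ) ^ 2 + (n : ℤ) := by
      obtain ⟨c, hc⟩ := Int.even_mul_succ_self (n : ℤ)
      have hdiv : ((n : ℤ) * ((n : ℤ) + 1)) / 2 = c := by omega
      rw [hdiv]
      have hr : (n : ℤ) * ((n : ℤ) + 1) = (n : ℤ) ^ 2 + (n : ℤ) := by ring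
      linarith
    have e4 : 2 * (((n : ℤ) * ((n : ℤ) + 1)) / 2 - (sigmaL n f : ℤ))
        = (n : ℤ) ^ 2 + (n : ℤ) - 2 * (sigmaL n f : ℤ) := by
      rw [mul_sub, e3]
    constructor
    · rw [e5]
      linarith [e1]
    · rw [e4, e5]
      linarith [e1]
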